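/- (Lower bound on the collision frequency.) Let F₁:ℝ³→[0,∞) be measurable with ∫_{ℝ³}F₁(v)dv=1, ∫_{ℝ³}|v|²F₁(v)dv<∞, and finite entropy ∫_{ℝ³}F₁(v) log F₁(v) dv < ∞. Then there exists χ>0 such that for all v∈ℝ³: ∫_{ℝ³} |v−w| F₁(w) dw ≥ χ √(1+|v|²). -/

import Mathlib

open MeasureTheory Real Metric Filter Set
open scoped RealInnerProductSpace Topology ENNReal
noncomputable section

/-- The velocity space ℝ³. -/
abbrev V : Type := EuclideanSpace ℝ (Fin 3)

/-- Surface measure on the unit sphere S² ⊂ ℝ³ (total mass 4π). -/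
def S2 : Measure (sphere (0:V) 1) := (volume : Measure V).toSphere

/-- The weight ⟨v⟩ = √(1+|v|²). -/
def jap (v : V) : ℝ := Real.sqrt (1 + ‖v‖^2)

/-- The weighted L¹ norm ‖f‖_{L¹_η} = ∫ |f(v)| ⟨v⟩^η dv. -/
def L1norm (f : V → ℝ) (η : ℝ) : ℝ := ∫ v : V, |f v| * (jap v)^η

/-- The weighted Lᵖ norm ‖f‖_{L^p_η} = (∫ |f(v)|^p ⟨v⟩^{pη} dv)^{1/p}. -/
def Lpnorm (f : V → ℝ) (p η : ℝ) : ℝ := (∫ v : V, |f v|^p * (jap v)^(p*η)) ^ (1/p)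

/-- Membership f ∈ L¹_η(ℝ³). -/
def MemL1w (f : V → ℝ) (η : ℝ) : Prop :=
  Integrable (fun v : V => |f v| * (jap v)^η)

/-- Membership f ∈ L^p_η(ℝ³). -/
def MemLpw (f : V → ℝ) (p η : ℝ) : Prop :=
  Integrable (fun v : V => |f v|^p * (jap v)^(p*η))

/-- A_ζ[ψ](v,w) = (1/4π) ∫_{S²} (ψ(v')+ψ(w')−ψ(v)−ψ(w)) dσ, with
v' = v + (ζ/2)(|q|σ−q), w' = w − (ζ/2)(|q|σ−q), q = v−w. -/
def Aop (ζ : ℝ) (ψ : V → ℝ) (v w : V) : ℝ :=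
  (4*π)⁻¹ * ∫ (σ : sphere (0:V) 1),
    (ψ (v + (ζ/2) • (‖v - w‖ • (σ:V) - (v - w)))
      + ψ (w - (ζ/2) • (‖v - w‖ • (σ:V) - (v - w))) - ψ v - ψ w) ∂S2

/-- J_e[ψ](v,w) = (1/4π) ∫_{S²} (ψ(ṽ*)−ψ(v)) dσ where ṽ* = v − κ(q−|q|σ), q = v−w. -/
def Jop (κ : ℝ) (ψ : V → ℝ) (v w : V) : ℝ :=
  (4*π)⁻¹ * ∫ (σ : sphere (0:V) 1),
    (ψ (v - κ • ((v - w) - ‖v - w‖ • (σ:V))) - ψ v) ∂S2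

/-- The gain part 𝒬⁺(f,f) of the inelastic Boltzmann operator with restitution
coefficient ε; with ζ = (1+ε)/2 and q = v−w,
'v = v + (ζ/2ε)(|q|σ−q) and 'w = w − (ζ/2ε)(|q|σ−q). -/
def Qplus (ε : ℝ) (f : V → ℝ) (v : V) : ℝ :=
  (4*π*ε^2)⁻¹ * ∫ w : V, (∫ (σ : sphere (0:V) 1),
      ‖v - w‖ * f (v + ((1+ε)/(4*ε)) • (‖v - w‖ • (σ:V) - (v - w)))
        * f (w - ((1+ε)/(4*ε)) • (‖v - w‖ • (σ:V) - (v - w))) ∂S2)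

/-- The loss part 𝒬⁻(f,f)(v) = f(v) ∫ |v−w| f(w) dw. -/
def Qminus (f : V → ℝ) (v : V) : ℝ := f v * ∫ w : V, ‖v - w‖ * f w

/-- The gain part ℒ⁺ of the linear scattering operator with host distribution F1,
mean free path lam, mass ratio α = m₁/(1+m₁) and inelasticity β = (1−e)/2;
with q = v−w, γ = α(1−β)/(1−2β) = α(1+e)/(2e), γ̄ = (1−α)(1−β)/(1−2β) = (1−α)(1+e)/(2e),
ṽ⋆ = v − γ(q−|q|σ), w̃⋆ = w + γ̄(q−|q|σ). -/
def Lplus (m₁ lam e : ℝ) (F1 f : V → ℝ) (v : V) : ℝ :=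
  (4*π*lam*e^2)⁻¹ * ∫ w : V, (∫ (σ : sphere (0:V) 1),
      ‖v - w‖ * f (v - ((m₁/(1+m₁)) * (1+e)/(2*e)) • ((v - w) - ‖v - w‖ • (σ:V)))
        * F1 (w + ((1/(1+m₁)) * (1+e)/(2*e)) • ((v - w) - ‖v - w‖ • (σ:V))) ∂S2)

/-- The collision frequency ν(v) = (1/λ) ∫ |v−w| F₁(w) dw. -/
def nufreq (lam : ℝ) (F1 : V → ℝ) (v : V) : ℝ := lam⁻¹ * ∫ w : V, ‖v - w‖ * F1 w

/-- **Lower bound on the collision frequency**: a probability density F₁ with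
finite second moment and finite entropy satisfies
∫ |v−w| F₁(w) dw ≥ χ √(1+|v|²) for some χ > 0 and all v. -/
theorem collision_frequency_lower_bound (F1 : V → ℝ) (hmeas : Measurable F1)
    (hpos : ∀ v, 0 ≤ F1 v) (hint : Integrable F1) (hmass : (∫ v : V, F1 v) = 1)
    (hmom : Integrable (fun v : V => ‖v‖^2 * F1 v))
    (hent : (∫⁻ v : V, ENNReal.ofReal (F1 v * Real.log (F1 v))) < ⊤) :
    ∃ χ : ℝ, 0 < χ ∧ ∀ v : V,
      χ * Real.sqrt (1 + ‖v‖^2) ≤ ∫ w : V, ‖v - w‖ * F1 w := by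

  classical
  -- notation
  set g : V → ℝ := fun v => ∫ w : V, ‖v - w‖ * F1 w with hg
  -- integrability of ‖w‖ * F1 w
  have hnormF1 : Integrable (fun w : V => ‖w‖ * F1 w) := by
    refine (hint.add hmom).mono' ?_ ?_
    · exact (measurable_norm.mul hmeas).aestronglyMeasurable
    · filter_upwards with w
      have h0 := hpos w
      simp only [Real.norm_eq_abs, Pi.add_apply]
      rw [abs_of_nonneg (mul_nonneg (norm_nonneg _) h0)]
      nlinarith [norm_nonneg w, sq_nonneg (‖w‖ - 1)]
  have hintv : ∀ v : V, Integrable (fun w : V => ‖v - w‖ * F1 w) := by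
    intro v
    refine ((hint.const_mul ‖v‖).add hnormF1).mono' ?_ ?_
    · exact ((measurable_const.sub measurable_id).norm.mul hmeas).aestronglyMeasurable
    · filter_upwards with w
      have h0 := hpos w
      have h1 : ‖v - w‖ ≤ ‖v‖ + ‖w‖ := norm_sub_le v w
      simp only [Real.norm_eq_abs, Pi.add_apply]
      rw [abs_of_nonneg (mul_nonneg (norm_nonneg _) h0)]
      nlinarith [norm_nonneg w, norm_nonneg (v - w), norm_nonneg v]
  -- pointwise positivity of g
  have hgnn : ∀ v : V, 0 ≤ g v := fun v =>
    integral_nonneg fun w => mul_nonneg (norm_nonneg _) (hpos w)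
  have hgpos : ∀ v : V, 0 < g v := by
    intro v
    rcases (hgnn v).lt_or_eq with h | h
    · exact h
    · exfalso
      have hz : (fun w : V => ‖v - w‖ * F1 w) =ᵐ[volume] 0 := by
        rw [← integral_eq_zero_iff_of_nonneg
          (fun w => mul_nonneg (norm_nonneg _) (hpos w)) (hintv v)]
        exact h.symm
      have hvnull : (volume : Measure V) {v} = 0 := measure_singleton v
      have hF0 : F1 =ᵐ[volume] 0 := by
        filter_upwards [hz, measure_eq_zero_iff_ae_notMem.mp hvnull] with w hw hwv
        have hne : v - w ≠ 0 := by
          intro h'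
          exact hwv (by simp [Set.mem_singleton_iff, (sub_eq_zero.mp h').symm])
        rcases mul_eq_zero.mp hw with h' | h'
        · exact absurd (norm_eq_zero.mp h') hne
        · exact h'
      have : (∫ v : V, F1 v) = 0 := by
        rw [integral_congr_ae hF0]; simp
      rw [hmass] at this; norm_num at this
  -- g is 1-Lipschitz
  have hlip : LipschitzWith 1 g := by
    refine LipschitzWith.of_dist_le_mul fun a b => ?_
    rw [NNReal.coe_one, one_mul, Real.dist_eq]
    have hsub : g a - g b = ∫ w : V, (‖a - w‖ - ‖b - w‖) * F1 w := by
      rw [hg]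
      simp only
      rw [← integral_sub (hintv a) (hintv b)]
      congr 1; funext w; ring
    rw [hsub]
    have h1 : |∫ w : V, (‖a - w‖ - ‖b - w‖) * F1 w|
        ≤ ∫ w : V, |(‖a - w‖ - ‖b - w‖) * F1 w| := by
      simpa only [Real.norm_eq_abs] using
        norm_integral_le_integral_norm (fun w : V => (‖a - w‖ - ‖b - w‖) * F1 w)
    have hIabs : Integrable (fun w : V => |(‖a - w‖ - ‖b - w‖) * F1 w|) := by
      have := ((hintv a).sub (hintv b)).abs
      simpa [Pi.sub_apply, sub_mul] using this
    have h2 : (∫ w : V, |(‖a - w‖ - ‖b - w‖) * F1 w|) ≤ ∫ w : V, ‖a - b‖ * F1 w := by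
      refine integral_mono hIabs (hint.const_mul _) fun w => ?_
      rw [abs_mul, abs_of_nonneg (hpos w)]
      refine mul_le_mul_of_nonneg_right ?_ (hpos w)
      have := abs_norm_sub_norm_le (a - w) (b - w)
      simpa [sub_sub_sub_cancel_right] using this
    have h3 : (∫ w : V, ‖a - b‖ * F1 w) = ‖a - b‖ := by
      rw [integral_const_mul, hmass, mul_one]
    calc |∫ w : V, (‖a - w‖ - ‖b - w‖) * F1 w| ≤ ∫ w : V, ‖a - b‖ * F1 w := h1.trans h2
      _ = ‖a - b‖ := h3
      _ = dist a b := (dist_eq_norm a b).symm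
  -- first moment
  set M : ℝ := ∫ w : V, ‖w‖ * F1 w with hM
  have hMnn : 0 ≤ M := integral_nonneg fun w => mul_nonneg (norm_nonneg _) (hpos w)
  -- lower bound for large v
  have hlarge : ∀ v : V, ‖v‖ - M ≤ g v := by
    intro v
    have hle : (∫ w : V, (‖v‖ - ‖w‖) * F1 w) ≤ g v := by
      have hIlow : Integrable (fun w : V => (‖v‖ - ‖w‖) * F1 w) := by
        have := (hint.const_mul ‖v‖).sub hnormF1
        exact this.congr (ae_of_all _ fun w => by simp [sub_mul])
      refine integral_mono hIlow (hintv v) fun w => ?_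
      refine mul_le_mul_of_nonneg_right ?_ (hpos w)
      have := norm_sub_norm_le v w
      linarith [norm_sub_le v w, abs_norm_sub_norm_le v w,
        le_abs_self (‖v‖ - ‖w‖), (abs_le.mp (abs_norm_sub_norm_le v w)).2]
    have heq : (∫ w : V, (‖v‖ - ‖w‖) * F1 w) = ‖v‖ - M := by
      have : (fun w : V => (‖v‖ - ‖w‖) * F1 w)
          = fun w : V => ‖v‖ * F1 w - ‖w‖ * F1 w := by funext w; ring
      rw [this, integral_sub (hint.const_mul _) hnormF1, integral_const_mul, hmass, mul_one, hM]
    linarith [hle, heq ▸ hle]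
  -- minimum on the closed ball
  set R : ℝ := 2 * M + 1 with hR
  obtain ⟨v₀, hv₀mem, hv₀min⟩ :=
    (isCompact_closedBall (0 : V) R).exists_isMinOn
      ⟨0, mem_closedBall_self (by positivity)⟩ hlip.continuous.continuousOn
  set m : ℝ := g v₀ with hm
  have hmpos : 0 < m := hgpos v₀
  set C : ℝ := Real.sqrt (1 + R ^ 2) with hC
  have hCpos : 0 < C := Real.sqrt_pos.mpr (by positivity)
  refine ⟨min (1/4) (m / C), lt_min (by norm_num) (by positivity), fun v => ?_⟩
  have hsqnn : 0 ≤ Real.sqrt (1 + ‖v‖ ^ 2) := Real.sqrt_nonneg _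
  by_cases hv : ‖v‖ ≤ R
  · -- compact case
    have hsq : Real.sqrt (1 + ‖v‖ ^ 2) ≤ C := by
      apply Real.sqrt_le_sqrt
      nlinarith [norm_nonneg v, hMnn]
    have hgm : m ≤ g v := hv₀min (by simpa [mem_closedBall, dist_eq_norm] using hv)
    calc min (1/4) (m / C) * Real.sqrt (1 + ‖v‖ ^ 2)
        ≤ (m / C) * C := by
          apply mul_le_mul (min_le_right _ _) hsq hsqnn
          positivity
      _ = m := by field_simp
      _ ≤ g v := hgm
  · -- large velocity case
    push_neg at hv
    have hv1 : 1 ≤ ‖v‖ := by nlinarith [hMnn]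
    have hsq : Real.sqrt (1 + ‖v‖ ^ 2) ≤ 2 * ‖v‖ := by
      have h1 : Real.sqrt (1 + ‖v‖ ^ 2) ≤ Real.sqrt ((1 + ‖v‖) ^ 2) := by
        apply Real.sqrt_le_sqrt; nlinarith
      rw [Real.sqrt_sq (by linarith)] at h1
      linarith
    have hgv : ‖v‖ / 2 ≤ g v := by
      have := hlarge v
      nlinarith
    calc min (1/4) (m / C) * Real.sqrt (1 + ‖v‖ ^ 2)
        ≤ (1/4) * (2 * ‖v‖) := by
          apply mul_le_mul (min_le_left _ _) hsq hsqnn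
          norm_num
      _ = ‖v‖ / 2 := by ring
      _ ≤ g v := hgv
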